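/- If Δ(X) > t(X) (the dispersion character of X exceeds its tightness), then X is maximally resolvable. -/

import Mathlib

universe u

open Cardinal Set

/-- A space is `κ`-resolvable iff it has `κ` pairwise disjoint dense subsets. -/
def Resolvable (X : Type u) [TopologicalSpace X] (κ : Cardinal.{u}) : Prop :=
  ∃ (ι : Type u) (D : ι → Set X), #ι = κ ∧ (∀ i, Dense (D i)) ∧
    Pairwise (Function.onFun Disjoint D)

/-- `L` is left-separated: it has a well-ordering all of whose initial segments
are closed in the subspace `L`. -/
def LeftSeparated {X : Type u} [TopologicalSpace X] (L : Set X) : Prop :=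
  ∃ r : L → L → Prop, IsWellOrder L r ∧ ∀ x : L, IsClosed {y : L | r y x}

/-- `R` is right-separated: it has a well-ordering all of whose initial segments
are open in the subspace `R`. -/
def RightSeparated {X : Type u} [TopologicalSpace X] (R : Set X) : Prop :=
  ∃ r : R → R → Prop, IsWellOrder R r ∧ ∀ x : R, IsOpen {y : R | r y x}

/-- The dispersion character `Δ(X)`: the minimal cardinality of a nonempty open set. -/
noncomputable def dispersion (X : Type u) [TopologicalSpace X] : Cardinal.{u} :=
  sInf {c | ∃ G : Set X, IsOpen G ∧ G.Nonempty ∧ #G = c}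

/-- The tightness of `x` in `X`. -/
noncomputable def tightnessAt (X : Type u) [TopologicalSpace X] (x : X) : Cardinal.{u} :=
  sInf {l | ℵ₀ ≤ l ∧ ∀ A : Set X, x ∈ closure A → ∃ B ⊆ A, #B ≤ l ∧ x ∈ closure B}

/-- The tightness of the space `X`. -/
noncomputable def tightness (X : Type u) [TopologicalSpace X] : Cardinal.{u} :=
  ⨆ x : X, tightnessAt X x

lemma pyt_core {X : Type u} [TopologicalSpace X] {κ : Cardinal.{u}}
    (tight : ∀ (x : X) (A : Set X), x ∈ closure A → ∃ B ⊆ A, #B ≤ κ ∧ x ∈ closure B)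
    (hκ : ℵ₀ ≤ κ) (hκd : κ < dispersion X)
    (ι : Type u) (hι : #ι ≤ dispersion X)
    {G : Set X} (hGo : IsOpen G) (hGne : G.Nonempty) :
    ∃ V, V ⊆ G ∧ V.Nonempty ∧ ∃ D : ι → Set X,
      (∀ ξ, D ξ ⊆ V) ∧ (∀ ξ, ∀ x ∈ V, x ∈ closure (D ξ)) ∧
      Pairwise (Function.onFun Disjoint D) := by
  classical
  set SG : Set Cardinal.{u} := {c | ∃ W, W ⊆ G ∧ IsOpen W ∧ W.Nonempty ∧ #W = c} with hSG
  have hSGne : SG.Nonempty := ⟨#G, G, le_refl _, hGo, hGne, rfl⟩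
  set μ := sInf SG with hμdef
  obtain ⟨V, hVG, hVo, hVne, hVcard⟩ : μ ∈ SG := csInf_mem hSGne
  have hdμ : dispersion X ≤ μ := le_csInf hSGne (fun c hc => by
    obtain ⟨W, _, hWo, hWne, hWc⟩ := hc
    exact csInf_le (OrderBot.bddBelow _) ⟨W, hWo, hWne, hWc⟩)
  have hκμ : κ < μ := lt_of_lt_of_le hκd hdμ
  have hμω : ℵ₀ ≤ μ := le_trans hκ hκμ.le
  have hmin : ∀ W, W ⊆ V → IsOpen W → W.Nonempty → μ ≤ #W := fun W hWV hWo hWne =>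
    csInf_le (OrderBot.bddBelow _) ⟨W, hWV.trans hVG, hWo, hWne, rfl⟩
  -- the index type
  set T := (↥V × ι) with hT
  have hTμ : #T ≤ μ := by
    rw [hT, Cardinal.mk_prod, Cardinal.lift_id, Cardinal.lift_id, hVcard]
    calc μ * #ι ≤ μ * μ := mul_le_mul_right (hι.trans hdμ) μ
      _ = μ := Cardinal.mul_eq_self hμω
  obtain ⟨r, wo, hr⟩ := Cardinal.ord_eq T
  haveI := wo
  have hseg : ∀ i : T, #{j // r j i} < μ := by
    intro i
    have h1 := Ordinal.typein_lt_type r i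
    rw [← hr] at h1
    have h2 := Cardinal.lt_ord.1 h1
    change #{j // r j i} < #T at h2
    exact h2.trans_le hTμ
  -- choice at each step
  have step : ∀ (x : X) (P : Set X), ∃ S : Set X, #S ≤ κ ∧ S ⊆ V \ (P ∪ {x}) ∧
      (x ∈ closure (V \ (P ∪ {x})) → x ∈ closure S) := by
    intro x P
    by_cases hcl : x ∈ closure (V \ (P ∪ {x}))
    · obtain ⟨B, hBsub, hBcard, hBcl⟩ := tight x _ hcl
      exact ⟨B, hBcard, hBsub, fun _ => hBcl⟩
    · exact ⟨∅, by simp, empty_subset _, fun h => absurd h hcl⟩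
  set F : ∀ i : T, (∀ j, r j i → Set X) → Set X :=
    fun i IH => (step (i.1 : X) (⋃ j : {j // r j i}, IH j j.2)).choose with hF
  have wf : WellFounded r := wo.toIsWellFounded.wf
  set B : T → Set X := wf.fix F with hB
  have hBeq : ∀ i, B i = (step (i.1 : X) (⋃ j : {j // r j i}, B j)).choose := by
    intro i
    rw [hB]
    exact wf.fix_eq F i
  set prev : T → Set X := fun i => ⋃ j : {j // r j i}, B j with hprevdef
  have hspec : ∀ i : T, #(B i) ≤ κ ∧ B i ⊆ V \ (prev i ∪ {(i.1 : X)}) ∧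
      ((i.1 : X) ∈ closure (V \ (prev i ∪ {(i.1 : X)})) → (i.1 : X) ∈ closure (B i)) := by
    intro i
    rw [hBeq i]
    exact (step (i.1 : X) (prev i)).choose_spec
  have hprevcard : ∀ i, #(prev i) < μ := by
    intro i
    calc #(prev i) ≤ #{j // r j i} * ⨆ j : {j // r j i}, #(B j) := Cardinal.mk_iUnion_le _
      _ ≤ #{j // r j i} * κ := mul_le_mul_right (ciSup_le' fun j : {j // r j i} => (hspec j.1).1) _
      _ < μ := Cardinal.mul_lt_of_lt hμω (hseg i) hκμ
  have hPcard : ∀ i : T, #((prev i ∪ {(i.1 : X)} : Set X)) < μ := by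
    intro i
    calc #((prev i ∪ {(i.1 : X)} : Set X)) ≤ #(prev i) + #({(i.1 : X)} : Set X) :=
        Cardinal.mk_union_le _ _
      _ = #(prev i) + 1 := by rw [Cardinal.mk_singleton]
      _ < μ := Cardinal.add_lt_of_lt hμω (hprevcard i) (lt_of_lt_of_le one_lt_aleph0 hμω)
  have hxcl : ∀ i : T, (i.1 : X) ∈ closure (V \ (prev i ∪ {(i.1 : X)})) := by
    intro i
    rw [mem_closure_iff]
    intro N hNo hxN
    have hNVne : (N ∩ V).Nonempty := ⟨(i.1 : X), hxN, i.1.2⟩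
    have hle : μ ≤ #(N ∩ V : Set X) := hmin _ inter_subset_right (hNo.inter hVo) hNVne
    by_contra hcon
    have hsub : (N ∩ V : Set X) ⊆ prev i ∪ {(i.1 : X)} := by
      intro y hy
      by_contra hyP
      exact hcon ⟨y, hy.1, hy.2, hyP⟩
    exact absurd (hle.trans (Cardinal.mk_le_mk_of_subset hsub)) (not_le.mpr (hPcard i))
  have hBcl : ∀ i : T, (i.1 : X) ∈ closure (B i) := fun i => (hspec i).2.2 (hxcl i)
  have hBdisj : ∀ i j : T, i ≠ j → Disjoint (B i) (B j) := by
    have key : ∀ i j, r j i → Disjoint (B i) (B j) := by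
      intro i j hji
      rw [Set.disjoint_left]
      intro a ha haj
      have hmem : a ∈ prev i := mem_iUnion.2 ⟨⟨j, hji⟩, haj⟩
      exact ((hspec i).2.1 ha).2 (Or.inl hmem)
    intro i j hij
    rcases trichotomous_of r i j with h | h | h
    · exact (key j i h).symm
    · exact absurd h hij
    · exact key i j h
  refine ⟨V, hVG, hVne, fun ξ => ⋃ p : ↥V, B (p, ξ), ?_, ?_, ?_⟩
  · intro ξ a ha
    obtain ⟨p, hp⟩ := mem_iUnion.1 ha
    exact ((hspec (p, ξ)).2.1 hp).1
  · intro ξ x hx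
    have h1 : B (⟨x, hx⟩, ξ) ⊆ ⋃ p : ↥V, B (p, ξ) := subset_iUnion (fun p => B (p, ξ)) ⟨x, hx⟩
    exact closure_mono h1 (hBcl (⟨x, hx⟩, ξ))
  · intro ξ ξ' hne
    refine Set.disjoint_iUnion_left.2 fun p => Set.disjoint_iUnion_right.2 fun q => ?_
    refine hBdisj _ _ (fun hpq => hne ?_)
    exact congrArg Prod.snd hpq

/-- Pytkeev: if `Δ(X) > t(X)` then `X` is maximally resolvable. -/
theorem stmt5 {X : Type u} [TopologicalSpace X]
    (h : tightness X < dispersion X) :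
    Resolvable X (dispersion X) := by
  classical
  rcases isEmpty_or_nonempty X with hE | hNE
  · exfalso
    have h1 : tightness X = 0 := by
      rw [tightness]
      exact ciSup_of_empty _
    have hemp : {c : Cardinal.{u} | ∃ G : Set X, IsOpen G ∧ G.Nonempty ∧ #G = c} = ∅ := by
      ext c
      simp only [mem_setOf_eq, mem_empty_iff_false, iff_false, not_exists]
      rintro G ⟨-, ⟨x, -⟩, -⟩
      exact hE.false x
    have h2 : dispersion X = 0 := by
      rw [dispersion, hemp]
      exact Cardinal.sInf_empty
    rw [h1, h2] at h
    exact lt_irrefl _ h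
  · set κ := tightness X with hκdef
    have hxmem : ∀ x : X, ℵ₀ ≤ tightnessAt X x ∧
        ∀ A : Set X, x ∈ closure A → ∃ B ⊆ A, #B ≤ tightnessAt X x ∧ x ∈ closure B := by
      intro x
      have : tightnessAt X x ∈
          {l | ℵ₀ ≤ l ∧ ∀ A : Set X, x ∈ closure A → ∃ B ⊆ A, #B ≤ l ∧ x ∈ closure B} :=
        csInf_mem ⟨max ℵ₀ #X, le_max_left _ _, fun A hA =>
          ⟨A, Subset.rfl, le_trans (Cardinal.mk_set_le A) (le_max_right _ _), hA⟩⟩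
      exact this
    have hle : ∀ x : X, tightnessAt X x ≤ κ := fun x =>
      le_ciSup (Cardinal.bddAbove_range _) x
    have tight : ∀ (x : X) (A : Set X), x ∈ closure A → ∃ B ⊆ A, #B ≤ κ ∧ x ∈ closure B := by
      intro x A hA
      obtain ⟨B, hBA, hBc, hBcl⟩ := (hxmem x).2 A hA
      exact ⟨B, hBA, hBc.trans (hle x), hBcl⟩
    have hκ : ℵ₀ ≤ κ := le_trans (hxmem hNE.some).1 (hle hNE.some)
    -- index type
    have hSne : {c : Cardinal.{u} | ∃ G : Set X, IsOpen G ∧ G.Nonempty ∧ #G = c}.Nonempty :=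
      ⟨#(univ : Set X), univ, isOpen_univ, univ_nonempty, rfl⟩
    obtain ⟨G₀, hG₀o, hG₀ne, hG₀card⟩ :
        dispersion X ∈ {c : Cardinal.{u} | ∃ G : Set X, IsOpen G ∧ G.Nonempty ∧ #G = c} :=
      csInf_mem hSne
    set ι := ↥G₀ with hι
    -- the family of "good" sets
    set Good : Set X → Prop := fun V => V.Nonempty ∧ ∃ D : ι → Set X,
      (∀ ξ, D ξ ⊆ V) ∧ (∀ ξ, ∀ x ∈ V, x ∈ closure (D ξ)) ∧
      Pairwise (Function.onFun Disjoint D) with hGood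
    have core : ∀ U : Set X, IsOpen U → U.Nonempty → ∃ V ⊆ U, Good V := by
      intro U hUo hUne
      obtain ⟨V, hVU, hVne, D, hD⟩ :=
        pyt_core tight hκ h ι (le_of_eq hG₀card) hUo hUne
      exact ⟨V, hVU, hVne, D, hD⟩
    -- Zorn: maximal pairwise disjoint family of good sets
    set 𝒜 : Set (Set (Set X)) :=
      {F | (∀ W ∈ F, Good W) ∧ F.Pairwise fun a b => Disjoint a b} with h𝒜
    obtain ⟨𝒱, h𝒱⟩ : ∃ m, Maximal (· ∈ 𝒜) m := by
      apply zorn_subset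
      intro c hc𝒜 hchain
      refine ⟨⋃₀ c, ⟨?_, ?_⟩, fun s hs => subset_sUnion_of_mem hs⟩
      · rintro W ⟨F, hFc, hWF⟩
        exact (hc𝒜 hFc).1 W hWF
      · rintro a ⟨F₁, hF₁, haF₁⟩ b ⟨F₂, hF₂, hbF₂⟩ hab
        rcases hchain.total hF₁ hF₂ with hsub | hsub
        · exact (hc𝒜 hF₂).2 (hsub haF₁) hbF₂ hab
        · exact (hc𝒜 hF₁).2 haF₁ (hsub hbF₂) hab
    have h𝒱mem : 𝒱 ∈ 𝒜 := h𝒱.1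
    have hdense : Dense (⋃₀ 𝒱) := by
      rw [dense_iff_inter_open]
      intro U hUo hUne
      by_contra hcon
      have hint : U ∩ ⋃₀ 𝒱 = ∅ := not_nonempty_iff_eq_empty.1 hcon
      obtain ⟨V, hVU, hVGood⟩ := core U hUo hUne
      have hdisjV : ∀ W ∈ 𝒱, Disjoint V W := by
        intro W hW
        rw [Set.disjoint_left]
        intro x hxV hxW
        have : x ∈ U ∩ ⋃₀ 𝒱 := ⟨hVU hxV, W, hW, hxW⟩
        rw [hint] at this
        exact this
      have hVnot : V ∉ 𝒱 := by
        intro hmem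
        obtain ⟨x, hx⟩ := hVGood.1
        exact (hdisjV V hmem).le_bot ⟨hx, hx⟩
      have hins : insert V 𝒱 ∈ 𝒜 := by
        constructor
        · rintro W (rfl | hW)
          · exact hVGood
          · exact h𝒱mem.1 W hW
        · apply Set.Pairwise.insert h𝒱mem.2
          intro W hW _
          exact ⟨hdisjV W hW, (hdisjV W hW).symm⟩
      have := h𝒱.2 hins (subset_insert _ _)
      exact hVnot (this (mem_insert _ _))
    -- choose the dense families
    have hDex : ∀ W : ↥𝒱, ∃ D : ι → Set X,
        (∀ ξ, D ξ ⊆ (W : Set X)) ∧ (∀ ξ, ∀ x ∈ (W : Set X), x ∈ closure (D ξ)) ∧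
        Pairwise (Function.onFun Disjoint D) := fun W => (h𝒱mem.1 W W.2).2
    choose Dfam hDsub hDcl hDpair using hDex
    refine ⟨ι, fun ξ => ⋃ W : ↥𝒱, Dfam W ξ, hG₀card, ?_, ?_⟩
    · intro ξ
      rw [dense_iff_inter_open]
      intro U hUo hUne
      obtain ⟨y, hyU, W, hW𝒱, hyW⟩ := (dense_iff_inter_open.1 hdense) U hUo hUne
      have hycl : y ∈ closure (Dfam ⟨W, hW𝒱⟩ ξ) := hDcl ⟨W, hW𝒱⟩ ξ y hyW
      obtain ⟨z, hzU, hz⟩ := (mem_closure_iff.1 hycl) U hUo hyU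
      exact ⟨z, hzU, mem_iUnion.2 ⟨⟨W, hW𝒱⟩, hz⟩⟩
    · intro ξ ξ' hne
      refine Set.disjoint_iUnion_left.2 fun W => Set.disjoint_iUnion_right.2 fun W' => ?_
      by_cases hWW : W = W'
      · subst hWW
        exact hDpair W hne
      · have hWne : (W : Set X) ≠ (W' : Set X) := fun hh => hWW (Subtype.ext hh)
        exact Set.disjoint_of_subset (hDsub W ξ) (hDsub W' ξ')
          (h𝒱mem.2 W.2 W'.2 hWne)
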